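/- (Two-dimensional form of the Günter derivative matrix.) Let u : ℝ³ → ℝ³ be differentiable with ∂_{x_3}u ≡ 0 (u independent of x₃), and let n ∈ ℝ³ with n₃ = 0, τ = (−n₂, n₁, 0). Then at every point the Günter derivative matrix satisfies M^(n)u = ∇u n − n(∇·u) = e₃ × ∂_τ u, where ∂_τ u is the vector with components Σ_{j=1}^{3} τ_j ∂_{x_j}u_i. -/

import Mathlib

open Matrix

/-- The canonical basis vector `e i` of `ℝ³`. -/
noncomputable def e (i : Fin 3) : Fin 3 → ℝ := Pi.single i 1

/-- The partial derivative `∂_{x_i} u_j (x)` of a vector field `u : ℝ³ → ℝ³`. -/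
noncomputable def pd (u : (Fin 3 → ℝ) → (Fin 3 → ℝ)) (x : Fin 3 → ℝ) (i j : Fin 3) : ℝ :=
  fderiv ℝ u x (e i) j

/-- The gradient matrix `(∇u)_{ij} = ∂_{x_i} u_j (x)`. -/
noncomputable def gradMatrix (u : (Fin 3 → ℝ) → (Fin 3 → ℝ)) (x : Fin 3 → ℝ) :
    Matrix (Fin 3) (Fin 3) ℝ :=
  Matrix.of fun i j => pd u x i j

/-- The divergence `∇ · u` of a vector field `u : ℝ³ → ℝ³` at `x`. -/
noncomputable def divg (u : (Fin 3 → ℝ) → (Fin 3 → ℝ)) (x : Fin 3 → ℝ) : ℝ :=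
  ∑ j, pd u x j j

/-- The Günter derivative matrix applied to `u`:
`(M^(n) u)_i = ∑ j (n_j ∂_{x_i} u_j − n_i ∂_{x_j} u_j)`. -/
noncomputable def gunterMatrix (n : Fin 3 → ℝ) (u : (Fin 3 → ℝ) → (Fin 3 → ℝ))
    (x : Fin 3 → ℝ) : Fin 3 → ℝ :=
  fun i => ∑ j, (n j * pd u x i j - n i * pd u x j j)

/-- The directional derivative `∂_τ u`, with components `∑ j τ_j ∂_{x_j} u_i`. -/
noncomputable def dirDeriv (τ : Fin 3 → ℝ) (u : (Fin 3 → ℝ) → (Fin 3 → ℝ))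
    (x : Fin 3 → ℝ) : Fin 3 → ℝ :=
  fun i => ∑ j, τ j * pd u x j i

/-- Two-dimensional form of the Günter derivative matrix:
for `u` independent of `x₃` and `n` with `n₃ = 0`,
`M^(n)u = ∇u n − n(∇·u) = e₃ × ∂_τ u` with `τ = (−n₂, n₁, 0)`.
(Zero-based indices: `x₃ ↔ index 2`.) -/
theorem gunterMatrix_two_dimensional (u : (Fin 3 → ℝ) → (Fin 3 → ℝ))
    (hu : Differentiable ℝ u) (hu3 : ∀ x, fderiv ℝ u x (e 2) = 0)
    (n : Fin 3 → ℝ) (hn3 : n 2 = 0) :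
    ∀ x : Fin 3 → ℝ,
      gunterMatrix n u x = gradMatrix u x *ᵥ n - divg u x • n ∧
      gunterMatrix n u x = e 2 ⨯₃ dirDeriv ![-n 1, n 0, 0] u x := by
  intro x
  have h2 : ∀ j, pd u x 2 j = 0 := by
    intro j; simp [pd, hu3 x]
  constructor
  · funext i
    simp only [gunterMatrix, Pi.sub_apply, mulVec, dotProduct, gradMatrix, Matrix.of_apply,
      Pi.smul_apply, smul_eq_mul, divg, Fin.sum_univ_three, hn3, h2]
    ring
  · funext i
    fin_cases i <;>
      simp [gunterMatrix, cross_apply, dirDeriv, e, Fin.sum_univ_three, hn3, h2] <;> ring
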